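/- The quotient metric space (QC⁰[0,1], D_Ψ) is a Polish space: it is separable and complete. -/

import Mathlib

def C0 (f : ℝ → ℝ) : Prop := ContinuousOn f (Set.Icc 0 1) ∧ f 0 = 0 ∧ f 1 = 0

noncomputable def Psi (a : ℝ) (g : ℝ → ℝ) : ℝ → ℝ := fun x => g (Int.fract (x + a)) - g a

noncomputable def supDist (f g : ℝ → ℝ) : ℝ := sSup {v : ℝ | ∃ x ∈ Set.Icc (0:ℝ) 1, v = |f x - g x|}

noncomputable def DPsi (f g : ℝ → ℝ) : ℝ :=
  sInf {v : ℝ | ∃ a ∈ Set.Icc (0:ℝ) 1, v = supDist f (Psi a g)}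

open Set

lemma fract_mem_Icc (y : ℝ) : Int.fract y ∈ Icc (0:ℝ) 1 :=
  ⟨Int.fract_nonneg y, (Int.fract_lt_one y).le⟩

lemma fract_fract_add (y b : ℝ) : Int.fract (Int.fract y + b) = Int.fract (y + b) := by
  have h : Int.fract y + b = y + b + (-⌊y⌋ : ℤ) := by
    rw [Int.fract]; push_cast; ring
  rw [h, Int.fract_add_intCast]

lemma fract_add_fract (y b : ℝ) : Int.fract (b + Int.fract y) = Int.fract (b + y) := by
  rw [add_comm b, fract_fract_add, add_comm]

lemma C0.bound {f : ℝ → ℝ} (hf : C0 f) : ∃ C, 0 ≤ C ∧ ∀ x ∈ Icc (0:ℝ) 1, |f x| ≤ C := by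
  obtain ⟨C, hC⟩ := isCompact_Icc.exists_bound_of_continuousOn hf.1
  exact ⟨max C 0, le_max_right _ _, fun x hx =>
    (Real.norm_eq_abs (f x) ▸ hC x hx).trans (le_max_left _ _)⟩

lemma supDist_nonneg (f g : ℝ → ℝ) : 0 ≤ supDist f g :=
  Real.sSup_nonneg' ⟨|f 0 - g 0|, ⟨0, by norm_num, rfl⟩, abs_nonneg _⟩

lemma supDist_le {f g : ℝ → ℝ} {C : ℝ} (hC : 0 ≤ C)
    (h : ∀ x ∈ Icc (0:ℝ) 1, |f x - g x| ≤ C) : supDist f g ≤ C :=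
  Real.sSup_le (by rintro v ⟨x, hx, rfl⟩; exact h x hx) hC

lemma le_supDist {f g : ℝ → ℝ} {C : ℝ} (h : ∀ x ∈ Icc (0:ℝ) 1, |f x - g x| ≤ C)
    {x : ℝ} (hx : x ∈ Icc (0:ℝ) 1) : |f x - g x| ≤ supDist f g :=
  le_csSup ⟨C, by rintro v ⟨y, hy, rfl⟩; exact h y hy⟩ ⟨x, hx, rfl⟩

lemma DPsi_nonneg (f g : ℝ → ℝ) : 0 ≤ DPsi f g :=
  Real.sInf_nonneg (by rintro v ⟨a, ha, rfl⟩; exact supDist_nonneg _ _)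

lemma DPsi_le (f g : ℝ → ℝ) {a : ℝ} (ha : a ∈ Icc (0:ℝ) 1) :
    DPsi f g ≤ supDist f (Psi a g) :=
  csInf_le ⟨0, by rintro v ⟨b, hb, rfl⟩; exact supDist_nonneg _ _⟩ ⟨a, ha, rfl⟩

lemma DPsi_lt {f g : ℝ → ℝ} {a ε C : ℝ} (ha : a ∈ Icc (0:ℝ) 1) (hC : 0 ≤ C) (hCε : C < ε)
    (h : ∀ x ∈ Icc (0:ℝ) 1, |f x - Psi a g x| ≤ C) : DPsi f g < ε :=
  lt_of_le_of_lt ((DPsi_le f g ha).trans (supDist_le hC h)) hCε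

lemma exists_pointwise_of_DPsi_lt {f g : ℝ → ℝ} {ε : ℝ} (hf : C0 f) (hg : C0 g)
    (h : DPsi f g < ε) : ∃ a ∈ Icc (0:ℝ) 1, ∀ x ∈ Icc (0:ℝ) 1, |f x - Psi a g x| < ε := by
  have hne : {v : ℝ | ∃ a ∈ Set.Icc (0:ℝ) 1, v = supDist f (Psi a g)}.Nonempty :=
    ⟨supDist f (Psi 0 g), 0, by norm_num, rfl⟩
  obtain ⟨v, ⟨a, ha, rfl⟩, hv⟩ := exists_lt_of_csInf_lt hne h
  obtain ⟨Cf, _, hCf⟩ := hf.bound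
  obtain ⟨Cg, _, hCg⟩ := hg.bound
  have hb : ∀ x ∈ Icc (0:ℝ) 1, |f x - Psi a g x| ≤ Cf + (Cg + Cg) := by
    intro x hx
    have h1 := hCf x hx
    have h2 := hCg _ (fract_mem_Icc (x + a))
    have h3 := hCg a ha
    simp only [Psi]
    calc |f x - (g (Int.fract (x + a)) - g a)|
        ≤ |f x| + |g (Int.fract (x + a)) - g a| := by exact abs_sub _ _
      _ ≤ Cf + (Cg + Cg) := by
          have := (abs_sub _ _ : |g (Int.fract (x + a)) - g a| ≤ |g (Int.fract (x+a))| + |g a|)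
          linarith
  exact ⟨a, ha, fun x hx => lt_of_le_of_lt (le_supDist hb hx) hv⟩

lemma psi_comp (a b : ℝ) (g : ℝ → ℝ) (x : ℝ) :
    Psi a (Psi b g) x = Psi (Int.fract (a + b)) g x := by
  simp only [Psi]
  rw [fract_fract_add, fract_add_fract]
  ring_nf

lemma psi_diff_bound {h h' : ℝ → ℝ} {t : ℝ} (hb : ∀ y ∈ Icc (0:ℝ) 1, |h y - h' y| ≤ t)
    {a : ℝ} (ha : a ∈ Icc (0:ℝ) 1) (x : ℝ) : |Psi a h x - Psi a h' x| ≤ 2 * t := by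
  simp only [Psi]
  have h1 := hb _ (fract_mem_Icc (x + a))
  have h2 := hb a ha
  have : Psi a h x - Psi a h' x =
      (h (Int.fract (x + a)) - h' (Int.fract (x + a))) - (h a - h' a) := by
    simp only [Psi]; ring
  calc |h (Int.fract (x + a)) - h a - (h' (Int.fract (x + a)) - h' a)|
      = |(h (Int.fract (x + a)) - h' (Int.fract (x + a))) - (h a - h' a)| := by ring_nf
    _ ≤ |h (Int.fract (x + a)) - h' (Int.fract (x + a))| + |h a - h' a| := abs_sub _ _
    _ ≤ 2 * t := by linarith

lemma psi_one_eq {g : ℝ → ℝ} (hg0 : g 0 = 0) (hg1 : g 1 = 0) {x : ℝ} (hx : x ∈ Icc (0:ℝ) 1) :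
    Psi 1 g x = g x := by
  simp only [Psi, Int.fract_add_one, hg1, sub_zero]
  rcases lt_or_eq_of_le hx.2 with h1 | h1
  · rw [Int.fract_eq_self.2 ⟨hx.1, h1⟩]
  · rw [h1, Int.fract_one, hg0, hg1]

lemma QC0_separable : ∃ D : Set (ℝ → ℝ), D.Countable ∧ (∀ f ∈ D, C0 f) ∧
    ∀ f : ℝ → ℝ, C0 f → ∀ ε : ℝ, 0 < ε → ∃ g ∈ D, DPsi f g < ε := by
  obtain ⟨T, hTc, hTd⟩ := TopologicalSpace.exists_countable_dense C(Icc (0:ℝ) 1, ℝ)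
  set z0 : Icc (0:ℝ) 1 := ⟨0, Set.left_mem_Icc.2 zero_le_one⟩ with hz0
  set z1 : Icc (0:ℝ) 1 := ⟨1, Set.right_mem_Icc.2 zero_le_one⟩ with hz1
  set adj : C(Icc (0:ℝ) 1, ℝ) → (ℝ → ℝ) := fun t x =>
    t (Set.projIcc 0 1 zero_le_one x) - ((1 - x) * t z0 + x * t z1) with hadj
  have hadjC0 : ∀ t, C0 (adj t) := by
    intro t
    refine ⟨Continuous.continuousOn ?_, ?_, ?_⟩
    · exact (t.continuous.comp continuous_projIcc).sub (by continuity)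
    · simp [hadj, Set.projIcc_left, hz0]
    · simp [hadj, Set.projIcc_right, hz1]
  refine ⟨adj '' T, hTc.image _, by rintro _ ⟨t, -, rfl⟩; exact hadjC0 t, ?_⟩
  intro f hf ε hε
  set F : C(Icc (0:ℝ) 1, ℝ) := ⟨(Icc (0:ℝ) 1).restrict f, hf.1.restrict⟩ with hF
  obtain ⟨t, htb, htT⟩ := Metric.dense_iff.1 hTd F (ε/4) (by positivity)
  have hdist : dist t F < ε / 4 := Metric.mem_ball.1 htb
  have hpt : ∀ y : Icc (0:ℝ) 1, |t y - f y| < ε / 4 := by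
    intro y
    have := ContinuousMap.dist_apply_le_dist (f := t) (g := F) y
    rw [Real.dist_eq] at this
    exact lt_of_le_of_lt this hdist
  have ht0 : |t z0| < ε / 4 := by
    have := hpt z0; rw [show ((z0 : Icc (0:ℝ) 1) : ℝ) = 0 from rfl, hf.2.1, sub_zero] at this
    exact this
  have ht1 : |t z1| < ε / 4 := by
    have := hpt z1; rw [show ((z1 : Icc (0:ℝ) 1) : ℝ) = 1 from rfl, hf.2.2, sub_zero] at this
    exact this
  have hbd : ∀ x ∈ Icc (0:ℝ) 1, |f x - adj t x| ≤ ε / 2 := by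
    intro x hx
    have hproj : Set.projIcc (0:ℝ) 1 zero_le_one x = ⟨x, hx⟩ := Set.projIcc_of_mem _ hx
    have h1 : |f x - t ⟨x, hx⟩| < ε / 4 := by
      have := hpt ⟨x, hx⟩; rwa [abs_sub_comm] at this
    have h2 : |(1 - x) * t z0 + x * t z1| ≤ ε / 4 := by
      calc |(1 - x) * t z0 + x * t z1| ≤ |(1 - x) * t z0| + |x * t z1| := abs_add_le _ _
        _ = (1 - x) * |t z0| + x * |t z1| := by
            rw [abs_mul, abs_mul, abs_of_nonneg (by linarith [hx.2] : (0:ℝ) ≤ 1 - x),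
              abs_of_nonneg hx.1]
        _ ≤ (1 - x) * (ε / 4) + x * (ε / 4) :=
            add_le_add (mul_le_mul_of_nonneg_left ht0.le (by linarith [hx.2]))
              (mul_le_mul_of_nonneg_left ht1.le hx.1)
        _ = ε / 4 := by ring
    have : adj t x = t ⟨x, hx⟩ - ((1 - x) * t z0 + x * t z1) := by rw [hadj]; simp [hproj]
    rw [this]
    have heq : f x - (t ⟨x, hx⟩ - ((1 - x) * t z0 + x * t z1))
        = (f x - t ⟨x, hx⟩) + ((1 - x) * t z0 + x * t z1) := by ring
    rw [heq]
    calc |(f x - t ⟨x, hx⟩) + ((1 - x) * t z0 + x * t z1)|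
        ≤ |f x - t ⟨x, hx⟩| + |(1 - x) * t z0 + x * t z1| := abs_add_le _ _
      _ ≤ ε / 2 := by linarith
  refine ⟨adj t, ⟨t, htT, rfl⟩, ?_⟩
  have hc0 := hadjC0 t
  refine DPsi_lt (a := 1) (C := ε/2) (by norm_num) (by positivity) (by linarith) ?_
  intro x hx
  rw [psi_one_eq hc0.2.1 hc0.2.2 hx]
  exact hbd x hx

lemma QC0_complete : ∀ u : ℕ → (ℝ → ℝ), (∀ n, C0 (u n)) →
    (∀ ε : ℝ, 0 < ε → ∃ N : ℕ, ∀ m ≥ N, ∀ n ≥ N, DPsi (u m) (u n) < ε) →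
    ∃ f : ℝ → ℝ, C0 f ∧
      Filter.Tendsto (fun n => DPsi (u n) f) Filter.atTop (nhds 0) := by
  intro u hu hC
  have hpow : ∀ k : ℕ, (0:ℝ) < (2:ℝ)⁻¹ ^ k := fun k => by positivity
  choose N hNs using fun k : ℕ => hC ((2:ℝ)⁻¹ ^ k) (hpow k)
  let nn : ℕ → ℕ := fun k => Nat.rec (motive := fun _ => ℕ) (N 0)
    (fun k ih => max (ih + 1) (N (k+1))) k
  have hnnN : ∀ k, N k ≤ nn k := by
    intro k; cases k with
    | zero => exact le_refl _
    | succ k => exact le_max_right _ _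
  have hnnlt : ∀ k, nn k < nn (k+1) := fun k =>
    lt_of_lt_of_le (Nat.lt_succ_self _) (le_max_left _ _)
  have hstep : ∀ k, DPsi (u (nn k)) (u (nn (k+1))) < (2:ℝ)⁻¹ ^ k := fun k =>
    hNs k _ (hnnN k) _ (le_trans (hnnN k) (hnnlt k).le)
  choose a ha hptw using fun k => exists_pointwise_of_DPsi_lt (hu _) (hu _) (hstep k)
  let c : ℕ → ℝ := fun k => Nat.rec (motive := fun _ => ℝ) 0
    (fun k ih => Int.fract (ih + a k)) k
  have hcsucc : ∀ k, c (k+1) = Int.fract (c k + a k) := fun k => rfl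
  have hc : ∀ k, c k ∈ Ico (0:ℝ) 1 := by
    intro k; cases k with
    | zero => exact ⟨le_refl 0, zero_lt_one⟩
    | succ k => exact ⟨Int.fract_nonneg _, Int.fract_lt_one _⟩
  have hcIcc : ∀ k, c k ∈ Icc (0:ℝ) 1 := fun k => Ico_subset_Icc_self (hc k)
  let v : ℕ → ℝ → ℝ := fun k x => u (nn k) (Int.fract (x + c k)) - u (nn k) (c k)
  have hvstep : ∀ k x, |v k x - v (k+1) x| ≤ 2 * (2:ℝ)⁻¹ ^ k := by
    intro k x
    have key : v k x - v (k+1) x =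
        (u (nn k) (Int.fract (x + c k)) - Psi (a k) (u (nn (k+1))) (Int.fract (x + c k)))
        - (u (nn k) (c k) - Psi (a k) (u (nn (k+1))) (c k)) := by
      simp only [v, Psi, hcsucc]
      rw [fract_fract_add]
      have h2 : Int.fract (x + Int.fract (c k + a k)) = Int.fract (x + c k + a k) := by
        rw [fract_add_fract, add_assoc]
      rw [h2]
      ring
    rw [key]
    have h1 := (hptw k _ (fract_mem_Icc (x + c k))).le
    have h2 := (hptw k _ (hcIcc k)).le
    refine le_trans (abs_sub _ _) ?_
    linarith
  have hcauchy : ∀ x, CauchySeq (fun k => v k x) := by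
    intro x
    refine cauchySeq_of_le_geometric (2:ℝ)⁻¹ 2 (by norm_num) (fun k => ?_)
    rw [Real.dist_eq]
    exact hvstep k x
  let f : ℝ → ℝ := fun x => Filter.limUnder Filter.atTop (fun k => v k x)
  have hlim : ∀ x, Filter.Tendsto (fun k => v k x) Filter.atTop (nhds (f x)) :=
    fun x => (hcauchy x).tendsto_limUnder
  have hvl : ∀ x k l, k ≤ l → |v k x - v l x| ≤ 4 * ((2:ℝ)⁻¹ ^ k - (2:ℝ)⁻¹ ^ l) := by
    intro x k l hkl
    induction l, hkl using Nat.le_induction with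
    | base => simp
    | succ l hkl ih =>
      have hs := hvstep l x
      have h3 : ((2:ℝ)⁻¹ ^ (l+1)) = (2:ℝ)⁻¹ ^ l / 2 := by rw [pow_succ]; ring
      have hsplit : v k x - v (l+1) x = (v k x - v l x) + (v l x - v (l+1) x) := by ring
      calc |v k x - v (l+1) x| ≤ |v k x - v l x| + |v l x - v (l+1) x| := by
            rw [hsplit]; exact abs_add_le _ _
        _ ≤ 4 * ((2:ℝ)⁻¹ ^ k - (2:ℝ)⁻¹ ^ l) + 2 * (2:ℝ)⁻¹ ^ l := add_le_add ih hs
        _ = 4 * ((2:ℝ)⁻¹ ^ k - (2:ℝ)⁻¹ ^ (l+1)) := by rw [h3]; ring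
  have hvf : ∀ k x, |v k x - f x| ≤ 4 * (2:ℝ)⁻¹ ^ k := by
    intro k x
    have htend : Filter.Tendsto (fun l => |v k x - v l x|) Filter.atTop
        (nhds (|v k x - f x|)) := (tendsto_const_nhds.sub (hlim x)).abs
    refine le_of_tendsto htend ?_
    filter_upwards [Filter.eventually_ge_atTop k] with l hl
    exact (hvl x k l hl).trans (by have := (hpow l).le; linarith)
  have hvcont : ∀ k, Continuous (v k) := by
    intro k
    have hw : Continuous ((u (nn k)) ∘ Int.fract) :=
      ContinuousOn.comp_fract'' (hu (nn k)).1 (by rw [(hu _).2.1, (hu _).2.2])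
    exact ((hw.comp (continuous_id.add continuous_const)).sub continuous_const)
  have hunif : TendstoUniformlyOn (fun k x => v k x) f Filter.atTop (Icc 0 1) := by
    rw [Metric.tendstoUniformlyOn_iff]
    intro ε hε
    have h4 : Filter.Tendsto (fun k : ℕ => 4 * (2:ℝ)⁻¹ ^ k) Filter.atTop (nhds 0) := by
      have := tendsto_pow_atTop_nhds_zero_of_lt_one
        (by norm_num : (0:ℝ) ≤ 2⁻¹) (by norm_num : (2:ℝ)⁻¹ < 1)
      simpa using this.const_mul 4
    filter_upwards [h4.eventually (gt_mem_nhds hε)] with k hk x hx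
    rw [Real.dist_eq, abs_sub_comm]
    exact lt_of_le_of_lt (hvf k x) hk
  have hfcont : ContinuousOn f (Icc 0 1) :=
    hunif.continuousOn (Filter.Eventually.of_forall fun k => (hvcont k).continuousOn).frequently
  have hv0 : ∀ k, v k 0 = 0 := by
    intro k
    simp only [v, zero_add, Int.fract_eq_self.2 ⟨(hc k).1, (hc k).2⟩, sub_self]
  have hv1 : ∀ k, v k 1 = 0 := by
    intro k
    show u (nn k) (Int.fract (1 + c k)) - u (nn k) (c k) = 0
    rw [add_comm, Int.fract_add_one, Int.fract_eq_self.2 ⟨(hc k).1, (hc k).2⟩, sub_self]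
  have hf0 : f 0 = 0 := by
    have h1 : Filter.Tendsto (fun k => v k 0) Filter.atTop (nhds 0) := by
      simp only [hv0]; exact tendsto_const_nhds
    exact tendsto_nhds_unique (hlim 0) h1
  have hf1 : f 1 = 0 := by
    have h1 : Filter.Tendsto (fun k => v k 1) Filter.atTop (nhds 0) := by
      simp only [hv1]; exact tendsto_const_nhds
    exact tendsto_nhds_unique (hlim 1) h1
  have hfrac_eq : ∀ k x, x ∈ Icc (0:ℝ) 1 → u (nn k) (Int.fract x) = u (nn k) x := by
    intro k x hx
    rcases lt_or_eq_of_le hx.2 with h1 | h1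
    · rw [Int.fract_eq_self.2 ⟨hx.1, h1⟩]
    · rw [h1, Int.fract_one, (hu _).2.1, (hu _).2.2]
  have hkey2 : ∀ k, ∃ b ∈ Icc (0:ℝ) 1, ∀ x ∈ Icc (0:ℝ) 1,
      |u (nn k) x - Psi b f x| ≤ 8 * (2:ℝ)⁻¹ ^ k := by
    intro k
    obtain ⟨b, hbIcc, m, hm⟩ : ∃ b ∈ Icc (0:ℝ) 1, ∃ m : ℤ, c k + b = (m:ℝ) := by
      rcases eq_or_ne (c k) 0 with h0 | h0
      · exact ⟨0, by norm_num, 0, by rw [h0]; norm_num⟩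
      · exact ⟨1 - c k, ⟨by linarith [(hc k).2], by linarith [(hc k).1]⟩, 1, by push_cast; ring⟩
    refine ⟨b, hbIcc, fun x hx => ?_⟩
    have hA : Int.fract (x + b + c k) = Int.fract x := by
      have hxx : x + b + c k = x + (m:ℝ) := by rw [← hm]; ring
      rw [hxx, Int.fract_add_intCast]
    have hz : v k (Int.fract (x + b)) = u (nn k) x - u (nn k) (c k) := by
      show u (nn k) (Int.fract (Int.fract (x + b) + c k)) - u (nn k) (c k) = _
      rw [fract_fract_add, hA, hfrac_eq k x hx]
    have hvb : v k b = - u (nn k) (c k) := by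
      show u (nn k) (Int.fract (b + c k)) - u (nn k) (c k) = _
      have hbc : b + c k = (m:ℝ) := by linarith [hm]
      rw [hbc, Int.fract_intCast, (hu (nn k)).2.1]
      ring
    have hdecomp : u (nn k) x - Psi b f x =
        (v k (Int.fract (x + b)) - f (Int.fract (x + b))) - (v k b - f b) := by
      simp only [Psi]
      rw [hz, hvb]
      ring
    rw [hdecomp]
    have h1 := hvf k (Int.fract (x + b))
    have h2 := hvf k b
    refine le_trans (abs_sub _ _) ?_
    linarith
  refine ⟨f, ⟨hfcont, hf0, hf1⟩, ?_⟩
  rw [Metric.tendsto_atTop]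
  intro ε hε
  obtain ⟨k, hk⟩ : ∃ k : ℕ, (2:ℝ)⁻¹ ^ k < ε / 32 :=
    exists_pow_lt_of_lt_one (by positivity) (by norm_num)
  refine ⟨N k, fun n hn => ?_⟩
  rw [Real.dist_eq, sub_zero, abs_of_nonneg (DPsi_nonneg _ _)]
  have h1 : DPsi (u n) (u (nn k)) < (2:ℝ)⁻¹ ^ k := hNs k n hn _ (hnnN k)
  obtain ⟨a', ha', hptw'⟩ := exists_pointwise_of_DPsi_lt (hu n) (hu (nn k)) h1
  obtain ⟨b, hb, hptb⟩ := hkey2 k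
  have hcomb : ∀ x ∈ Icc (0:ℝ) 1, |u n x - Psi (Int.fract (a' + b)) f x|
      ≤ 17 * (2:ℝ)⁻¹ ^ k := by
    intro x hx
    have e1 := (hptw' x hx).le
    have e2 : |Psi a' (u (nn k)) x - Psi a' (Psi b f) x| ≤ 2 * (8 * (2:ℝ)⁻¹ ^ k) :=
      psi_diff_bound hptb ha' x
    have e3 : Psi a' (Psi b f) x = Psi (Int.fract (a' + b)) f x := psi_comp a' b f x
    have hsplit : u n x - Psi (Int.fract (a' + b)) f x =
        (u n x - Psi a' (u (nn k)) x) + (Psi a' (u (nn k)) x - Psi a' (Psi b f) x) := by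
      rw [← e3]; ring
    rw [hsplit]
    refine le_trans (abs_add_le _ _) ?_
    linarith
  exact DPsi_lt (fract_mem_Icc _) (by positivity) (by linarith) hcomb

/-- `(QC⁰[0,1], D_Ψ)` is a Polish space: separable and complete.
Separability: a countable `D_Ψ`-dense family of elements of `C⁰[0,1]`; completeness:
every `D_Ψ`-Cauchy sequence in `C⁰[0,1]` has a `D_Ψ`-limit in `C⁰[0,1]`. -/
theorem QC0_polish :
    (∃ D : Set (ℝ → ℝ), D.Countable ∧ (∀ f ∈ D, C0 f) ∧
      ∀ f : ℝ → ℝ, C0 f → ∀ ε : ℝ, 0 < ε → ∃ g ∈ D, DPsi f g < ε) ∧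
    (∀ u : ℕ → (ℝ → ℝ), (∀ n, C0 (u n)) →
      (∀ ε : ℝ, 0 < ε → ∃ N : ℕ, ∀ m ≥ N, ∀ n ≥ N, DPsi (u m) (u n) < ε) →
      ∃ f : ℝ → ℝ, C0 f ∧
        Filter.Tendsto (fun n => DPsi (u n) f) Filter.atTop (nhds 0)) := by
  exact ⟨QC0_separable, QC0_complete⟩
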